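/- Let p be a prime and (m_n)_{n≥1} a sequence with 0 ≤ m_n < p^{n!} − 1 and m_i ≡ m_j (mod p^{i!} − 1) for i < j, not all m_n equal to 0. If the digit sums f(m_n) are bounded, then there exist N ∈ ℕ*, l ≥ 1, digits 0 < θ_1, …, θ_l < p, and exponent sequences g_{i,n} ∈ ℕ (1 ≤ i ≤ l, n ≥ N) with 0 ≤ g_{i,n} < n!, g_{i,n+1} ≡ g_{i,n} (mod n!), and g_{i,n} ≠ g_{j,n} for i ≠ j, such that m_n = ∑_{i=1}^l θ_i p^{g_{i,n}} for all n ≥ N. -/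

import Mathlib

namespace BDSNF


/-- digit of `m` at position `t` in base `p`. -/
def d (p m t : ℕ) : ℕ := m / p ^ t % p

/-- base-`p` digit sum. -/
def F (p m : ℕ) : ℕ := (Nat.digits p m).sum

lemma d_zero (p m : ℕ) : d p m 0 = m % p := by simp [d]

lemma d_succ (p m t : ℕ) : d p m (t + 1) = d p (m / p) t := by
  simp [d, Nat.div_div_eq_div_mul, pow_succ']

lemma d_lt {p : ℕ} (hp : 2 ≤ p) (m t : ℕ) : d p m t < p :=
  Nat.mod_lt _ (by omega)

lemma d_eq_zero_of_lt {p m t : ℕ} (h : m < p ^ t) : d p m t = 0 := by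
  simp [d, Nat.div_eq_of_lt h]

lemma F_step {p : ℕ} (hp : 2 ≤ p) (m : ℕ) : F p m = m % p + F p (m / p) := by
  rcases Nat.eq_zero_or_pos m with h | h
  · simp [h, F]
  · rw [F, Nat.digits_def' (by omega : 1 < p) h]; rfl

lemma F_eq_self {p m : ℕ} (hp : 2 ≤ p) (h : m < p) : F p m = m := by
  rw [F_step hp, Nat.mod_eq_of_lt h, Nat.div_eq_of_lt h]
  simp [F]

lemma F_zero (p : ℕ) : F p 0 = 0 := by simp [F]

lemma sum_d_eq {p : ℕ} (hp : 2 ≤ p) {B : ℕ} : ∀ {m : ℕ}, m < p ^ B →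
    ∑ t ∈ Finset.range B, d p m t = F p m := by
  induction B with
  | zero => intro m hm; simp at hm; simp [hm, F]
  | succ B ih =>
    intro m hm
    rw [Finset.sum_range_succ']
    simp only [d_succ, d_zero]
    rw [ih (by
      have : m / p < p ^ B := by
        apply Nat.div_lt_of_lt_mul; rwa [← pow_succ']
      exact this)]
    rw [F_step hp m]; ring

lemma rep {p : ℕ} (hp : 2 ≤ p) {B : ℕ} : ∀ {m : ℕ}, m < p ^ B →
    ∑ t ∈ Finset.range B, d p m t * p ^ t = m := by
  induction B with
  | zero => intro m hm; simp at hm; simp [hm]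
  | succ B ih =>
    intro m hm
    rw [Finset.sum_range_succ']
    simp only [d_succ, d_zero, pow_succ', pow_zero, mul_one]
    have h2 : m / p < p ^ B := by
      apply Nat.div_lt_of_lt_mul; rwa [← pow_succ']
    calc ∑ t ∈ Finset.range B, d p (m / p) t * (p * p ^ t) + m % p
        = p * (∑ t ∈ Finset.range B, d p (m / p) t * p ^ t) + m % p := by
          rw [Finset.mul_sum]; congr 1; apply Finset.sum_congr rfl; intros; ring
      _ = p * (m / p) + m % p := by rw [ih h2]
      _ = m := Nat.div_add_mod m p

lemma lt_pow_of_d_zero {p K : ℕ} (hp : 2 ≤ p) {m : ℕ} (h : ∀ t, K ≤ t → d p m t = 0) :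
    m < p ^ K := by
  by_contra hc
  push_neg at hc
  have hm0 : m ≠ 0 := by
    intro h0; rw [h0] at hc
    exact absurd hc (Nat.pos_of_ne_zero (by positivity)).not_ge
  have hK : K ≤ Nat.log p m := (Nat.le_log_iff_pow_le (by omega) hm0).mpr hc
  have h1 : p ^ Nat.log p m ≤ m := Nat.pow_log_le_self p hm0
  have h2 : m < p ^ (Nat.log p m + 1) := Nat.lt_pow_succ_log_self (by omega) m
  have : d p m (Nat.log p m) ≠ 0 := by
    unfold d
    have hd1 : 1 ≤ m / p ^ Nat.log p m := Nat.one_le_div_iff (by positivity) |>.mpr h1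
    have hd2 : m / p ^ Nat.log p m < p := by
      rw [Nat.div_lt_iff_lt_mul (by positivity)]
      calc m < p ^ (Nat.log p m + 1) := h2
        _ = p * p ^ Nat.log p m := by ring
    rw [Nat.mod_eq_of_lt hd2]; omega
  exact this (h _ hK)


lemma div_facts {p : ℕ} (hp : 2 ≤ p) (x : ℕ) : x / p + x % p ≤ x ∧ 2 * (x / p) ≤ x := by
  have e := Nat.div_add_mod x p
  have h1 : x / p ≤ p * (x / p) := Nat.le_mul_of_pos_left _ (by omega)
  have h2 : 2 * (x / p) ≤ p * (x / p) := Nat.mul_le_mul_right _ hp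
  omega

lemma F_add_le {p : ℕ} (hp : 2 ≤ p) : ∀ s x y : ℕ, x + y ≤ s → F p (x + y) ≤ F p x + F p y := by
  intro s
  induction s using Nat.strong_induction_on with
  | _ s ih =>
    intro x y hs
    rcases Nat.eq_zero_or_pos (x + y) with h0 | h0
    · have hx : x = 0 := by omega
      have hy : y = 0 := by omega
      simp [hx, hy]
    obtain ⟨hx1, hx2⟩ := div_facts hp x
    obtain ⟨hy1, hy2⟩ := div_facts hp y
    rw [F_step hp (x + y), F_step hp x, F_step hp y]
    have hadd : (x + y) / p = x / p + y / p + if p ≤ x % p + y % p then 1 else 0 :=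
      Nat.add_div (by omega)
    have hmod : (x + y) % p = (x % p + y % p) % p := Nat.add_mod x y p
    by_cases hc : p ≤ x % p + y % p
    · have hm2 : (x + y) % p = x % p + y % p - p := by
        rw [hmod]
        have h3 : x % p + y % p = (x % p + y % p - p) + p := by omega
        have h4 : x % p < p := Nat.mod_lt x (by omega)
        have h5 : y % p < p := Nat.mod_lt y (by omega)
        rw [h3, Nat.add_mod_right, Nat.mod_eq_of_lt (by omega)]
        omega
      have hd2 : (x + y) / p = x / p + y / p + 1 := by rw [hadd]; simp [hc]
      rw [hm2, hd2]
      have h1 : F p (x / p + y / p + 1) ≤ F p (x / p + y / p) + F p 1 :=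
        ih (x / p + y / p + 1) (by omega) (x / p + y / p) 1 le_rfl
      have h2 : F p (x / p + y / p) ≤ F p (x / p) + F p (y / p) :=
        ih (x / p + y / p) (by omega) _ _ le_rfl
      have hF1 : F p 1 = 1 := F_eq_self hp (by omega)
      omega
    · push_neg at hc
      have hm2 : (x + y) % p = x % p + y % p := by rw [hmod, Nat.mod_eq_of_lt hc]
      have hd2 : (x + y) / p = x / p + y / p := by rw [hadd]; simp [Nat.not_le.mpr hc]
      rw [hm2, hd2]
      have h2 : F p (x / p + y / p) ≤ F p (x / p) + F p (y / p) :=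
        ih (x / p + y / p) (by omega) _ _ le_rfl
      omega

lemma F_add_le' {p : ℕ} (hp : 2 ≤ p) (x y : ℕ) : F p (x + y) ≤ F p x + F p y :=
  F_add_le hp (x + y) x y le_rfl

lemma d_add_of_F_add {p : ℕ} (hp : 2 ≤ p) : ∀ s x y : ℕ, x + y ≤ s →
    F p (x + y) = F p x + F p y → ∀ t, d p (x + y) t = d p x t + d p y t := by
  intro s
  induction s using Nat.strong_induction_on with
  | _ s ih =>
    intro x y hs heq t
    rcases Nat.eq_zero_or_pos (x + y) with h0 | h0
    · have hx : x = 0 := by omega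
      have hy : y = 0 := by omega
      simp [hx, hy, d]
    obtain ⟨hx1, hx2⟩ := div_facts hp x
    obtain ⟨hy1, hy2⟩ := div_facts hp y
    have hadd : (x + y) / p = x / p + y / p + if p ≤ x % p + y % p then 1 else 0 :=
      Nat.add_div (by omega)
    have hmod : (x + y) % p = (x % p + y % p) % p := Nat.add_mod x y p
    by_cases hc : p ≤ x % p + y % p
    · exfalso
      have hm2 : (x + y) % p = x % p + y % p - p := by
        rw [hmod]
        have h3 : x % p + y % p = (x % p + y % p - p) + p := by omega
        have h4 : x % p < p := Nat.mod_lt x (by omega)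
        have h5 : y % p < p := Nat.mod_lt y (by omega)
        rw [h3, Nat.add_mod_right, Nat.mod_eq_of_lt (by omega)]
        omega
      have hd2 : (x + y) / p = x / p + y / p + 1 := by rw [hadd]; simp [hc]
      have h1 : F p (x / p + y / p + 1) ≤ F p (x / p + y / p) + F p 1 := F_add_le' hp _ _
      have h2 : F p (x / p + y / p) ≤ F p (x / p) + F p (y / p) := F_add_le' hp _ _
      have hF1 : F p 1 = 1 := F_eq_self hp (by omega)
      have e1 : F p (x + y) = (x % p + y % p - p) + F p (x / p + y / p + 1) := by
        rw [F_step hp (x + y), hm2, hd2]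
      have e2 : F p x = x % p + F p (x / p) := F_step hp x
      have e3 : F p y = y % p + F p (y / p) := F_step hp y
      omega
    · push_neg at hc
      have hm2 : (x + y) % p = x % p + y % p := by rw [hmod, Nat.mod_eq_of_lt hc]
      have hd2 : (x + y) / p = x / p + y / p := by rw [hadd]; simp [Nat.not_le.mpr hc]
      have heq' : F p (x / p + y / p) = F p (x / p) + F p (y / p) := by
        have e1 : F p (x + y) = (x % p + y % p) + F p (x / p + y / p) := by
          rw [F_step hp (x + y), hm2, hd2]
        have e2 : F p x = x % p + F p (x / p) := F_step hp x
        have e3 : F p y = y % p + F p (y / p) := F_step hp y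
        have hle : F p (x / p + y / p) ≤ F p (x / p) + F p (y / p) := F_add_le' hp _ _
        omega
      cases t with
      | zero => simp [d_zero, hm2]
      | succ t =>
        rw [d_succ, d_succ, d_succ, hd2]
        exact ih (x / p + y / p) (by omega) _ _ le_rfl heq' t


lemma d_add_of_F_add' {p : ℕ} (hp : 2 ≤ p) (x y : ℕ) :
    F p (x + y) = F p x + F p y → ∀ t, d p (x + y) t = d p x t + d p y t :=
  d_add_of_F_add hp (x + y) x y le_rfl

/-- `F (p^K * q + s) = F q + F s` when `s < p^K`. -/
lemma F_split {p : ℕ} (hp : 2 ≤ p) : ∀ K q s : ℕ, s < p ^ K →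
    F p (p ^ K * q + s) = F p q + F p s := by
  intro K
  induction K with
  | zero =>
    intro q s hs
    rw [pow_zero] at hs
    have : s = 0 := by omega
    simp [this, F_zero]
  | succ K ih =>
    intro q s hs
    rw [F_step hp (p ^ (K + 1) * q + s)]
    have hmod : (p ^ (K + 1) * q + s) % p = s % p := by
      rw [Nat.add_mod, Nat.mul_mod, pow_succ, Nat.mul_mod_left]
      simp [Nat.mod_mod_of_dvd]
    have hdiv : (p ^ (K + 1) * q + s) / p = p ^ K * q + s / p := by
      rw [pow_succ', mul_assoc, Nat.mul_add_div (by omega)]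
    rw [hmod, hdiv, ih q (s / p) (by
      have : s / p < p ^ K := by
        apply Nat.div_lt_of_lt_mul
        rwa [← pow_succ']
      exact this)]
    rw [F_step hp s]
    ring

/-- Folding modulo `p^K - 1` does not increase the digit sum. -/
lemma F_mod_le {p K : ℕ} (hp : 2 ≤ p) (hK : 1 ≤ K) :
    ∀ a : ℕ, F p (a % (p ^ K - 1)) ≤ F p a := by
  have hQ : 2 ≤ p ^ K := by
    calc 2 ≤ p := hp
    _ = p ^ 1 := (pow_one p).symm
    _ ≤ p ^ K := Nat.pow_le_pow_right (by omega) hK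
  intro a
  induction a using Nat.strong_induction_on with
  | _ a ih =>
    rcases Nat.lt_or_ge a (p ^ K - 1) with h | h
    · rw [Nat.mod_eq_of_lt h]
    rcases Nat.eq_zero_or_pos (a / p ^ K) with hq | hq
    · -- a < p^K, a ≥ p^K - 1 so a = p^K - 1
      have ha : a < p ^ K := by
        by_contra hcon
        push_neg at hcon
        have := Nat.one_le_div_iff (show 0 < p ^ K by omega) |>.mpr hcon
        omega
      have : a = p ^ K - 1 := by omega
      rw [this, Nat.mod_self, F_zero]
      exact Nat.zero_le _
    · set q := a / p ^ K with hqdef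
      set s := a % p ^ K with hsdef
      have has : a = p ^ K * q + s := by rw [hqdef, hsdef]; exact (Nat.div_add_mod a (p ^ K)).symm
      have hslt : s < p ^ K := Nat.mod_lt a (by omega)
      have hmodeq : a % (p ^ K - 1) = (q + s) % (p ^ K - 1) := by
        have : a ≡ q + s [MOD p ^ K - 1] := by
          have hdvd : (p ^ K - 1) ∣ a - (q + s) := by
            have : a - (q + s) = (p ^ K - 1) * q := by
              rw [has]
              have : p ^ K * q = q + (p ^ K - 1) * q := by
                rw [Nat.sub_mul, one_mul]
                have : q ≤ p ^ K * q := Nat.le_mul_of_pos_left q (by omega)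
                omega
              omega
            rw [this]
            exact Dvd.intro _ rfl
          have hle : q + s ≤ a := by
            rw [has]
            have : q ≤ p ^ K * q := Nat.le_mul_of_pos_left q (by omega)
            omega
          exact (Nat.modEq_iff_dvd' hle).mpr hdvd |>.symm
        exact this
      rw [hmodeq]
      have hlt : q + s < a := by
        rw [has]
        have h1 : q < p ^ K * q := by
          calc q = 1 * q := (one_mul q).symm
            _ < p ^ K * q := by
              exact Nat.mul_lt_mul_of_lt_of_le (by omega) le_rfl hq
        omega
      calc F p ((q + s) % (p ^ K - 1)) ≤ F p (q + s) := ih (q + s) hlt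
        _ ≤ F p q + F p s := F_add_le' hp q s
        _ = F p a := by rw [has, F_split hp K q s hslt]

/-- Digit sum over a finite sum is subadditive. -/
lemma F_sum_le {p : ℕ} (hp : 2 ≤ p) {ι : Type*} (s : Finset ι) (v : ι → ℕ) :
    F p (∑ i ∈ s, v i) ≤ ∑ i ∈ s, F p (v i) := by
  induction s using Finset.cons_induction_on with
  | empty => simp [F_zero]
  | @cons a s ha ih =>
    rw [Finset.sum_cons, Finset.sum_cons]
    calc F p (v a + ∑ i ∈ s, v i) ≤ F p (v a) + F p (∑ i ∈ s, v i) := F_add_le' hp _ _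
      _ ≤ F p (v a) + ∑ i ∈ s, F p (v i) := by gcongr

/-- If the digit sum of a finite sum is exactly additive, the digits add with no carries. -/
lemma d_sum_of_F_sum {p : ℕ} (hp : 2 ≤ p) {ι : Type*} (s : Finset ι) (v : ι → ℕ)
    (h : F p (∑ i ∈ s, v i) = ∑ i ∈ s, F p (v i)) :
    ∀ t, d p (∑ i ∈ s, v i) t = ∑ i ∈ s, d p (v i) t := by
  induction s using Finset.cons_induction_on with
  | empty => simp [d]
  | @cons a s ha ih =>
    rw [Finset.sum_cons, Finset.sum_cons] at h
    have h1 : F p (v a + ∑ i ∈ s, v i) ≤ F p (v a) + F p (∑ i ∈ s, v i) := F_add_le' hp _ _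
    have h2 : F p (∑ i ∈ s, v i) ≤ ∑ i ∈ s, F p (v i) := F_sum_le hp s v
    have heq1 : F p (v a + ∑ i ∈ s, v i) = F p (v a) + F p (∑ i ∈ s, v i) := by omega
    have heq2 : F p (∑ i ∈ s, v i) = ∑ i ∈ s, F p (v i) := by omega
    intro t
    rw [Finset.sum_cons, Finset.sum_cons, d_add_of_F_add' hp _ _ heq1 t, ih heq2 t]

/-- base-Q digit of a -/
def e (Q a j : ℕ) : ℕ := a / Q ^ j % Q

lemma F_eq_sum_e {p : ℕ} (hp : 2 ≤ p) (K : ℕ) : ∀ T : ℕ, ∀ a : ℕ, a < (p ^ K) ^ T →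
    F p a = ∑ j ∈ Finset.range T, F p (e (p ^ K) a j) := by
  intro T
  induction T with
  | zero =>
    intro a ha
    rw [pow_zero] at ha
    obtain rfl : a = 0 := by omega
    simp [F_zero]
  | succ T ih =>
    intro a ha
    have hQ : 0 < p ^ K := by positivity
    have hdiv : a / p ^ K < (p ^ K) ^ T := by
      apply Nat.div_lt_of_lt_mul
      rwa [← pow_succ']
    rw [Finset.sum_range_succ']
    have he : ∀ j, e (p ^ K) a (j + 1) = e (p ^ K) (a / p ^ K) j := by
      intro j
      simp [e, Nat.div_div_eq_div_mul, pow_succ']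
    simp only [he]
    rw [← ih (a / p ^ K) hdiv]
    have he0 : e (p ^ K) a 0 = a % p ^ K := by simp [e]
    rw [he0]
    conv_lhs => rw [← Nat.div_add_mod a (p ^ K)]
    rw [F_split hp K (a / p ^ K) (a % p ^ K) (Nat.mod_lt a hQ)]

lemma modEq_sum_e {p K : ℕ} (hp : 2 ≤ p) : ∀ T : ℕ, ∀ a : ℕ, a < (p ^ K) ^ T →
    a ≡ ∑ j ∈ Finset.range T, e (p ^ K) a j [MOD p ^ K - 1] := by
  intro T
  induction T with
  | zero =>
    intro a ha
    rw [pow_zero] at ha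
    obtain rfl : a = 0 := by omega
    simp [Nat.ModEq.refl]
  | succ T ih =>
    intro a ha
    have hQ : 0 < p ^ K := by positivity
    have hdiv : a / p ^ K < (p ^ K) ^ T := by
      apply Nat.div_lt_of_lt_mul; rwa [← pow_succ']
    rw [Finset.sum_range_succ']
    have he : ∀ j, e (p ^ K) a (j + 1) = e (p ^ K) (a / p ^ K) j := by
      intro j; simp [e, Nat.div_div_eq_div_mul, pow_succ']
    simp only [he]
    have he0 : e (p ^ K) a 0 = a % p ^ K := by simp [e]
    rw [he0]
    have h1 : a = p ^ K * (a / p ^ K) + a % p ^ K := (Nat.div_add_mod a (p ^ K)).symm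
    have h2 : p ^ K ≡ 1 [MOD p ^ K - 1] := by
      unfold Nat.ModEq
      rw [Nat.mod_eq_sub_mod (by omega)]
      congr 1
      omega
    calc a = p ^ K * (a / p ^ K) + a % p ^ K := h1
      _ ≡ 1 * (a / p ^ K) + a % p ^ K [MOD p ^ K - 1] := (h2.mul_right _).add_right _
      _ = a / p ^ K + a % p ^ K := by ring
      _ ≡ (∑ j ∈ Finset.range T, e (p ^ K) (a / p ^ K) j) + a % p ^ K [MOD p ^ K - 1] :=
          (ih _ hdiv).add_right _


lemma d_e_shift {p K t : ℕ} (hp : 2 ≤ p) (ht : t < K) (a j : ℕ) :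
    d p (e (p ^ K) a j) t = d p a (K * j + t) := by
  have h1 : (p ^ K) ^ j = p ^ (K * j) := by rw [← pow_mul]
  have h2 : p ^ K = p ^ t * p ^ (K - t) := by rw [← pow_add]; congr 1; omega
  unfold e d
  rw [h1, h2, Nat.mod_mul_right_div_self]
  rw [Nat.mod_mod_of_dvd _ (dvd_pow_self p (by omega : K - t ≠ 0))]
  rw [Nat.div_div_eq_div_mul, ← pow_add]

lemma star {p K T : ℕ} (hp : 2 ≤ p) (hK : 1 ≤ K) {a r : ℕ} (ha : a < (p ^ K) ^ T)
    (hr : r = a % (p ^ K - 1)) (hr0 : r ≠ 0) (hf : F p a = F p r) :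
    ∀ t, t < K → d p r t = ∑ j ∈ Finset.range T, d p a (K * j + t) := by
  have hQ : 2 ≤ p ^ K := by
    calc 2 ≤ p := hp
      _ = p ^ 1 := (pow_one p).symm
      _ ≤ p ^ K := Nat.pow_le_pow_right (by omega) hK
  set M := ∑ j ∈ Finset.range T, e (p ^ K) a j with hM
  have h1 : F p a = ∑ j ∈ Finset.range T, F p (e (p ^ K) a j) := F_eq_sum_e hp K T a ha
  have h2 : F p M ≤ ∑ j ∈ Finset.range T, F p (e (p ^ K) a j) := F_sum_le hp _ _
  have h3 : r = M % (p ^ K - 1) := by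
    rw [hr]
    exact modEq_sum_e hp T a ha
  have h4 : F p r ≤ F p M := by rw [h3]; exact F_mod_le hp hK M
  have h5 : F p M = ∑ j ∈ Finset.range T, F p (e (p ^ K) a j) := by omega
  have h6 : ∀ t, d p M t = ∑ j ∈ Finset.range T, d p (e (p ^ K) a j) t :=
    d_sum_of_F_sum hp _ _ h5
  have h8 : M < p ^ K := by
    apply lt_pow_of_d_zero hp
    intro t htK
    rw [h6 t]
    apply Finset.sum_eq_zero
    intro j hj
    apply d_eq_zero_of_lt
    calc e (p ^ K) a j < p ^ K := Nat.mod_lt _ (by omega)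
      _ ≤ p ^ t := Nat.pow_le_pow_right (by omega) htK
  have h9 : M ≠ p ^ K - 1 := by
    intro hcon
    rw [hcon, Nat.mod_self] at h3
    exact hr0 h3
  have h10 : r = M := by rw [h3, Nat.mod_eq_of_lt (by omega)]
  intro t ht
  rw [h10, h6 t]
  apply Finset.sum_congr rfl
  intro j hj
  exact d_e_shift hp ht a j

def SS (p m B : ℕ) : Finset ℕ := (Finset.range B).filter fun t => d p m t ≠ 0

lemma mem_SS {p m B t : ℕ} : t ∈ SS p m B ↔ t < B ∧ d p m t ≠ 0 := by
  simp [SS]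

lemma rep_SS {p : ℕ} (hp : 2 ≤ p) {B m : ℕ} (hm : m < p ^ B) :
    ∑ t ∈ SS p m B, d p m t * p ^ t = m := by
  conv_rhs => rw [← rep hp hm]
  apply Finset.sum_filter_of_ne
  intro t ht hne
  intro h0
  rw [h0] at hne
  simp at hne

lemma card_SS_le_F {p : ℕ} (hp : 2 ≤ p) {B m : ℕ} (hm : m < p ^ B) :
    (SS p m B).card ≤ F p m := by
  rw [← sum_d_eq hp hm]
  calc (SS p m B).card = ∑ _t ∈ SS p m B, 1 := by simp
    _ ≤ ∑ t ∈ SS p m B, d p m t := by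
        apply Finset.sum_le_sum
        intro t ht
        have := (mem_SS.mp ht).2
        omega
    _ ≤ ∑ t ∈ Finset.range B, d p m t := by
        apply Finset.sum_le_sum_of_subset
        exact Finset.filter_subset _ _

lemma SS_nonempty {p : ℕ} (hp : 2 ≤ p) {B m : ℕ} (hm : m < p ^ B) (h0 : m ≠ 0) :
    (SS p m B).Nonempty := by
  rw [Finset.nonempty_iff_ne_empty]
  intro hcon
  apply h0
  have : ∀ t, 0 ≤ t → d p m t = 0 := by
    intro t _
    rcases Nat.lt_or_ge t B with h | h
    · by_contra hne
      have : t ∈ SS p m B := mem_SS.mpr ⟨h, hne⟩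
      rw [hcon] at this
      simp at this
    · exact d_eq_zero_of_lt (lt_of_lt_of_le hm (Nat.pow_le_pow_right (by omega) h))
  have := lt_pow_of_d_zero hp this
  simpa using this

/-- c is monotone along folds. -/
lemma card_SS_mono {p K T : ℕ} (hp : 2 ≤ p) (hK : 1 ≤ K) {a r : ℕ} (ha : a < (p ^ K) ^ T)
    (hr : r = a % (p ^ K - 1)) (hr0 : r ≠ 0) (hf : F p a = F p r) :
    (SS p r K).card ≤ (SS p a (K * T)).card := by
  have hstar := star hp hK ha hr hr0 hf
  have hex : ∀ t : ℕ, ∃ j : ℕ, t ∈ SS p r K → j < T ∧ d p a (K * j + t) ≠ 0 := by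
    intro t
    by_cases ht : t ∈ SS p r K
    · obtain ⟨htB, htd⟩ := mem_SS.mp ht
      rw [hstar t htB] at htd
      obtain ⟨j, hj, hjd⟩ := Finset.exists_ne_zero_of_sum_ne_zero htd
      exact ⟨j, fun _ => ⟨Finset.mem_range.mp hj, hjd⟩⟩
    · exact ⟨0, fun h => absurd h ht⟩
  choose jf hjf using hex
  apply Finset.card_le_card_of_injOn (fun t => K * jf t + t)
  · intro t ht
    obtain ⟨hjT, hjd⟩ := hjf t ht
    obtain ⟨htB, _⟩ := mem_SS.mp ht
    refine mem_SS.mpr ⟨?_, hjd⟩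
    calc K * jf t + t < K * jf t + K := by omega
      _ = K * (jf t + 1) := by ring
      _ ≤ K * T := Nat.mul_le_mul_left K (by omega)
  · intro t1 h1 t2 h2 heq
    simp only at heq
    have ht1 : t1 < K := (mem_SS.mp h1).1
    have ht2 : t2 < K := (mem_SS.mp h2).1
    have e1 : (K * jf t1 + t1) % K = t1 := by
      rw [Nat.mul_add_mod, Nat.mod_eq_of_lt ht1]
    have e2 : (K * jf t2 + t2) % K = t2 := by
      rw [Nat.mul_add_mod, Nat.mod_eq_of_lt ht2]
    rw [← e1, ← e2, heq]

lemma step_unique {p K T : ℕ} (hp : 2 ≤ p) (hK : 1 ≤ K) {a r : ℕ} (ha : a < (p ^ K) ^ T)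
    (hr : r = a % (p ^ K - 1)) (hr0 : r ≠ 0) (hf : F p a = F p r)
    (hc : (SS p a (K * T)).card ≤ (SS p r K).card) :
    ∀ t, t ∈ SS p r K → ∃ j, (j < K * T ∧ d p a j ≠ 0 ∧ j % K = t ∧ d p a j = d p r t) ∧
      ∀ j', j' < K * T → d p a j' ≠ 0 → j' % K = t → j' = j := by
  have hstar := star hp hK ha hr hr0 hf
  have hKpos : 0 < K := hK
  -- ψ : SS a → SS r, j ↦ j % K is well-defined
  have hmaps : ∀ j ∈ SS p a (K * T), j % K ∈ SS p r K := by
    intro j hj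
    obtain ⟨hjB, hjd⟩ := mem_SS.mp hj
    have hmK : j % K < K := Nat.mod_lt j hKpos
    refine mem_SS.mpr ⟨hmK, ?_⟩
    rw [hstar _ hmK]
    have hjq : j / K ∈ Finset.range T := by
      rw [Finset.mem_range]
      exact Nat.div_lt_of_lt_mul hjB
    have hterm : K * (j / K) + j % K = j := Nat.div_add_mod j K
    have : d p a (K * (j / K) + j % K) ≤ ∑ j' ∈ Finset.range T, d p a (K * j' + j % K) :=
      Finset.single_le_sum (f := fun j' => d p a (K * j' + j % K)) (fun _ _ => Nat.zero_le _) hjq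
    rw [hterm] at this
    omega
  -- surjectivity
  have hsurj : ∀ t ∈ SS p r K, ∃ j ∈ SS p a (K * T), j % K = t := by
    intro t ht
    obtain ⟨htB, htd⟩ := mem_SS.mp ht
    rw [hstar t htB] at htd
    obtain ⟨j, hj, hjd⟩ := Finset.exists_ne_zero_of_sum_ne_zero htd
    rw [Finset.mem_range] at hj
    refine ⟨K * j + t, mem_SS.mpr ⟨?_, hjd⟩, ?_⟩
    · calc K * j + t < K * j + K := by omega
        _ = K * (j + 1) := by ring
        _ ≤ K * T := Nat.mul_le_mul_left K (by omega)
    · rw [Nat.mul_add_mod, Nat.mod_eq_of_lt htB]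
  have hinj : ∀ j1 ∈ SS p a (K * T), ∀ j2 ∈ SS p a (K * T), j1 % K = j2 % K → j1 = j2 := by
    intro j1 hj1 j2 hj2 h12
    exact Finset.inj_on_of_surj_on_of_card_le (fun j _ => j % K) (fun j hj => hmaps j hj)
      (fun t ht => by obtain ⟨j, hj, hjeq⟩ := hsurj t ht; exact ⟨j, hj, hjeq⟩) hc hj1 hj2 h12
  intro t ht
  obtain ⟨j, hj, hjeq⟩ := hsurj t ht
  obtain ⟨hjB, hjd⟩ := mem_SS.mp hj
  have huniq : ∀ j', j' < K * T → d p a j' ≠ 0 → j' % K = t → j' = j := by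
    intro j' hj'B hj'd hj'eq
    exact hinj _ (mem_SS.mpr ⟨hj'B, hj'd⟩) _ hj (by rw [hj'eq, hjeq])
  refine ⟨j, ⟨hjB, hjd, hjeq, ?_⟩, huniq⟩
  -- value: d p a j = d p r t
  have htB := (mem_SS.mp ht).1
  rw [hstar t htB]
  have hjq : j / K ∈ Finset.range T := by
    rw [Finset.mem_range]
    exact Nat.div_lt_of_lt_mul hjB
  have hterm : K * (j / K) + j % K = j := Nat.div_add_mod j K
  rw [← hjeq]
  symm
  rw [show d p a j = d p a (K * (j / K) + j % K) by rw [hterm]]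
  apply Finset.sum_eq_single_of_mem _ hjq
  intro j'' hj'' hne
  rw [Finset.mem_range] at hj''
  by_contra hne0
  have h1 : K * j'' + j % K < K * T := by
    have : j % K < K := Nat.mod_lt j hKpos
    calc K * j'' + j % K < K * j'' + K := by omega
      _ = K * (j'' + 1) := by ring
      _ ≤ K * T := Nat.mul_le_mul_left K (by omega)
  have h2 : (K * j'' + j % K) % K = t := by
    rw [Nat.mul_add_mod, Nat.mod_eq_of_lt (Nat.mod_lt j hKpos), hjeq]
  have h3 := huniq _ h1 hne0 h2
  have hKe : K * j'' = K * (j / K) := by omega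
  exact hne (Nat.eq_of_mul_eq_mul_left hKpos hKe)

lemma mono_bdd_const : ∀ C : ℕ, ∀ h : ℕ → ℕ, (∀ k, h k ≤ h (k + 1)) → (∀ k, h k ≤ C) →
    ∃ k0, ∀ k, k0 ≤ k → h k = h k0 := by
  intro C
  induction C using Nat.strong_induction_on with
  | _ C ih =>
    intro h hmono hbd
    have hm : Monotone h := monotone_nat_of_le_succ hmono
    by_cases hex : ∃ k1, h 0 < h k1
    · obtain ⟨k1, hk1⟩ := hex
      have hC1 : h 0 + 1 ≤ C := le_trans hk1 (hbd k1)
      obtain ⟨k0', hk0'⟩ := ih (C - (h 0 + 1)) (by omega) (fun k => h (k1 + k) - (h 0 + 1))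
        (fun k => by
          have h1 : h (k1 + k) ≤ h (k1 + (k + 1)) := hm (by omega)
          show h (k1 + k) - (h 0 + 1) ≤ h (k1 + (k + 1)) - (h 0 + 1)
          omega)
        (fun k => by
          have := hbd (k1 + k)
          show h (k1 + k) - (h 0 + 1) ≤ C - (h 0 + 1)
          omega)
      refine ⟨k1 + k0', fun k hk => ?_⟩
      have hge : ∀ k', h 0 + 1 ≤ h (k1 + k') := fun k' => le_trans hk1 (hm (Nat.le_add_right _ _))
      have heq := hk0' (k - k1) (by omega)
      have h2 := hge (k - k1)
      have h3 := hge k0'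
      have h1 : k1 + (k - k1) = k := by omega
      rw [h1] at heq h2
      omega
    · push_neg at hex
      exact ⟨0, fun k _ => le_antisymm (hex k) (hm (Nat.zero_le k))⟩

end BDSNF

open BDSNF in
theorem bounded_digitSum_normal_form (p : ℕ) (hp : p.Prime) (m : ℕ → ℕ)
    (hlt : ∀ n, 1 ≤ n → m n < p ^ (Nat.factorial n) - 1)
    (hcomp : ∀ i j, 1 ≤ i → i < j → m j ≡ m i [MOD p ^ (Nat.factorial i) - 1])
    (hnz : ∃ n, 1 ≤ n ∧ m n ≠ 0)
    (hbd : ∃ C : ℕ, ∀ n, 1 ≤ n → (Nat.digits p (m n)).sum ≤ C) :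
    ∃ N l : ℕ, 1 ≤ N ∧ 1 ≤ l ∧ ∃ θ : Fin l → ℕ, ∃ g : Fin l → ℕ → ℕ,
      (∀ i, 0 < θ i ∧ θ i < p) ∧
      (∀ i, ∀ n, N ≤ n → g i n < (Nat.factorial n)) ∧
      (∀ i, ∀ n, N ≤ n → g i (n + 1) ≡ g i n [MOD (Nat.factorial n)]) ∧
      (∀ i j, i ≠ j → ∀ n, N ≤ n → g i n ≠ g j n) ∧
      (∀ n, N ≤ n → m n = ∑ i, θ i * p ^ g i n) := by
  have hp2 : 2 ≤ p := hp.two_le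
  obtain ⟨n0, hn0, hn0ne⟩ := hnz
  obtain ⟨C, hC⟩ := hbd
  -- basic facts
  have hfacpos : ∀ n : ℕ, 1 ≤ n.factorial := fun n => Nat.one_le_iff_ne_zero.mpr n.factorial_pos.ne'
  have hQ2 : ∀ n : ℕ, 2 ≤ p ^ n.factorial := fun n => by
    calc 2 ≤ p := hp2
      _ = p ^ 1 := (pow_one p).symm
      _ ≤ p ^ n.factorial := Nat.pow_le_pow_right (by omega) (hfacpos n)
  have hmlt : ∀ n, 1 ≤ n → m n < p ^ n.factorial := fun n hn => by
    have := hlt n hn; have := hQ2 n; omega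
  have hmod : ∀ n, 1 ≤ n → m n = m (n + 1) % (p ^ n.factorial - 1) := by
    intro n hn
    have h1 := hcomp n (n + 1) hn (by omega)
    have h2 : m n % (p ^ n.factorial - 1) = m n := Nat.mod_eq_of_lt (hlt n hn)
    unfold Nat.ModEq at h1
    omega
  have hne : ∀ n, n0 ≤ n → m n ≠ 0 := by
    intro n hn
    rcases eq_or_lt_of_le hn with h | h
    · rwa [← h]
    · have h1 := hcomp n0 n hn0 h
      unfold Nat.ModEq at h1
      have h2 : m n0 % (p ^ n0.factorial - 1) = m n0 := Nat.mod_eq_of_lt (hlt n0 hn0)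
      intro hcon
      rw [hcon] at h1
      simp at h1
      exact hn0ne (by omega)
  have hFmono : ∀ n, 1 ≤ n → F p (m n) ≤ F p (m (n + 1)) := by
    intro n hn
    rw [hmod n hn]
    exact F_mod_le hp2 (hfacpos n) _
  -- F eventually constant
  obtain ⟨k1, hk1⟩ := mono_bdd_const C (fun k => F p (m (n0 + k)))
    (fun k => by
      show F p (m (n0 + k)) ≤ F p (m (n0 + (k + 1)))
      have : n0 + (k + 1) = (n0 + k) + 1 := by omega
      rw [this]
      exact hFmono (n0 + k) (by omega))
    (fun k => hC (n0 + k) (by omega))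
  set N1 := n0 + k1 with hN1
  have hFconst : ∀ n, N1 ≤ n → F p (m n) = F p (m N1) := by
    intro n hn
    have := hk1 (n - n0) (by omega)
    rwa [show n0 + (n - n0) = n by omega] at this
  have hFstep : ∀ n, N1 ≤ n → F p (m (n + 1)) = F p (m n) := by
    intro n hn
    rw [hFconst n hn, hFconst (n + 1) (by omega)]
  -- the fold setup for each n ≥ N1
  have hsetup : ∀ n, N1 ≤ n → m (n + 1) < (p ^ n.factorial) ^ (n + 1) := by
    intro n hn
    have h1 : (p ^ n.factorial) ^ (n + 1) = p ^ (n + 1).factorial := by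
      rw [← pow_mul, Nat.factorial_succ, mul_comm]
    rw [h1]
    have := hmlt (n + 1) (by omega)
    exact this
  have hn0N1 : n0 ≤ N1 := by omega
  have h1N1 : 1 ≤ N1 := by omega
  -- c eventually constant
  have hcmono : ∀ n, N1 ≤ n → (SS p (m n) n.factorial).card ≤
      (SS p (m (n + 1)) (n + 1).factorial).card := by
    intro n hn
    have h1 := card_SS_mono (T := n + 1) hp2 (hfacpos n) (hsetup n hn)
      (hmod n (by omega)) (hne n (by omega)) (hFstep n hn)
    have h2 : n.factorial * (n + 1) = (n + 1).factorial := by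
      rw [Nat.factorial_succ, mul_comm]
    rwa [h2] at h1
  obtain ⟨k2, hk2⟩ := mono_bdd_const C (fun k => (SS p (m (N1 + k)) (N1 + k).factorial).card)
    (fun k => by
      show (SS p (m (N1 + k)) (N1 + k).factorial).card ≤
        (SS p (m (N1 + (k + 1))) (N1 + (k + 1)).factorial).card
      have : N1 + (k + 1) = (N1 + k) + 1 := by omega
      rw [this]
      exact hcmono (N1 + k) (by omega))
    (fun k => le_trans (card_SS_le_F hp2 (hmlt (N1 + k) (by omega))) (hC (N1 + k) (by omega)))
  set N := N1 + k2 with hNdef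
  have hN1N : N1 ≤ N := by omega
  have hcconst : ∀ n, N ≤ n → (SS p (m n) n.factorial).card = (SS p (m N) N.factorial).card := by
    intro n hn
    have := hk2 (n - N1) (by omega)
    have h2 := hk2 (N - N1) (by omega)
    rw [show N1 + (n - N1) = n by omega] at this
    rw [show N1 + (N - N1) = N by omega] at h2
    omega
  set l := (SS p (m N) N.factorial).card with hldef
  have hl1 : 1 ≤ l := by
    have := SS_nonempty hp2 (hmlt N (by omega)) (hne N (by omega))
    exact Finset.Nonempty.card_pos this
  -- the unique successor position
  have key : ∀ n t : ℕ, ∃ j : ℕ, N ≤ n → t ∈ SS p (m n) n.factorial →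
      (j ∈ SS p (m (n + 1)) (n + 1).factorial ∧ j % n.factorial = t ∧
        d p (m (n + 1)) j = d p (m n) t) := by
    intro n t
    by_cases hcase : N ≤ n ∧ t ∈ SS p (m n) n.factorial
    · obtain ⟨hn, ht⟩ := hcase
      have hfc : (SS p (m (n + 1)) (n.factorial * (n + 1))).card ≤
          (SS p (m n) n.factorial).card := by
        have h2 : n.factorial * (n + 1) = (n + 1).factorial := by
          rw [Nat.factorial_succ, mul_comm]
        rw [h2]
        rw [hcconst (n + 1) (by omega), hcconst n (by omega)]
      obtain ⟨j, ⟨hjB, hjd, hjm, hjv⟩, _⟩ := step_unique (T := n + 1) hp2 (hfacpos n)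
        (hsetup n (by omega)) (hmod n (by omega)) (hne n (by omega))
        (hFstep n (by omega)) hfc t ht
      refine ⟨j, fun _ _ => ⟨mem_SS.mpr ⟨?_, hjd⟩, hjm, hjv⟩⟩
      rwa [← show n.factorial * (n + 1) = (n + 1).factorial by rw [Nat.factorial_succ, mul_comm]]
    · exact ⟨0, fun hn ht => absurd ⟨hn, ht⟩ hcase⟩
  choose nxt hnxt using key
  -- enumeration of SS at level N
  have hcard : (SS p (m N) N.factorial).card = l := rfl
  set E := (SS p (m N) N.factorial).orderIsoOfFin hcard with hE
  -- the recursive position function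
  set G : ℕ → Fin l → ℕ := fun k => Nat.rec (motive := fun _ => Fin l → ℕ)
    (fun i => (E i : ℕ)) (fun k' Gk' i => nxt (N + k') (Gk' i)) k with hG
  have hG0 : ∀ i, G 0 i = (E i : ℕ) := fun i => rfl
  have hGsucc : ∀ k i, G (k + 1) i = nxt (N + k) (G k i) := fun k i => rfl
  -- invariant
  have hInv : ∀ k, ∀ i, G k i ∈ SS p (m (N + k)) (N + k).factorial ∧
      d p (m (N + k)) (G k i) = d p (m N) (E i : ℕ) := by
    intro k
    induction k with
    | zero =>
      intro i
      exact ⟨(E i).2, rfl⟩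
    | succ k ih =>
      intro i
      obtain ⟨hmem, hval⟩ := ih i
      obtain ⟨hmem', hmod', hval'⟩ := hnxt (N + k) (G k i) (by omega) hmem
      rw [hGsucc k i]
      constructor
      · rwa [show N + (k + 1) = (N + k) + 1 by omega]
      · rw [show N + (k + 1) = (N + k) + 1 by omega, hval', hval]
  have hGmod : ∀ k i, G (k + 1) i % (N + k).factorial = G k i := by
    intro k i
    obtain ⟨hmem, _⟩ := hInv k i
    obtain ⟨_, hmod', _⟩ := hnxt (N + k) (G k i) (by omega) hmem
    rw [hGsucc k i]
    exact hmod'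
  have hGinj : ∀ k, Function.Injective (G k) := by
    intro k
    induction k with
    | zero =>
      intro i i' hii
      rw [hG0, hG0] at hii
      exact E.injective (Subtype.ext hii)
    | succ k ih =>
      intro i i' hii
      apply ih
      have h1 := hGmod k i
      have h2 := hGmod k i'
      rw [hii] at h1
      exact h1.symm.trans h2
  -- final sum identity
  have hsum : ∀ k, m (N + k) = ∑ i : Fin l, d p (m N) (E i : ℕ) * p ^ (G k i) := by
    intro k
    have hrep := rep_SS hp2 (hmlt (N + k) (by omega))
    rw [← hrep]
    symm
    apply Finset.sum_bij (i := fun (i : Fin l) (_ : i ∈ Finset.univ) => G k i)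
    · intro i _
      exact (hInv k i).1
    · intro i _ i' _ hii
      exact hGinj k hii
    · -- surjectivity via cardinality
      intro t ht
      have hcards : (SS p (m (N + k)) (N + k).factorial).card ≤ (Finset.univ : Finset (Fin l)).card := by
        rw [Finset.card_univ, Fintype.card_fin]
        rw [hcconst (N + k) (by omega)]
      have := Finset.surj_on_of_inj_on_of_card_le
        (s := (Finset.univ : Finset (Fin l))) (t := SS p (m (N + k)) (N + k).factorial)
        (fun i _ => G k i) (fun i hi => (hInv k i).1)
        (fun i hi i' hi' h => hGinj k h) hcards t ht
      obtain ⟨i, hi, hieq⟩ := this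
      exact ⟨i, hi, hieq.symm⟩
    · intro i _
      rw [(hInv k i).2]
  -- conclusion
  refine ⟨N, l, by omega, hl1, fun i => d p (m N) (E i : ℕ), fun i n => G (n - N) i,
    ?_, ?_, ?_, ?_, ?_⟩
  · intro i
    constructor
    · have hmem : (E i : ℕ) ∈ SS p (m N) N.factorial := (E i).2
      have := (mem_SS.mp hmem).2
      show 0 < d p (m N) (E i : ℕ)
      omega
    · show d p (m N) (E i : ℕ) < p
      exact d_lt hp2 _ _
  · intro i n hn
    have := (hInv (n - N) i).1
    rw [show N + (n - N) = n by omega] at this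
    exact (mem_SS.mp this).1
  · intro i n hn
    have h1 := hGmod (n - N) i
    rw [show N + (n - N) = n by omega] at h1
    have h2 : n + 1 - N = (n - N) + 1 := by omega
    show G (n + 1 - N) i % n.factorial = G (n - N) i % n.factorial
    rw [h2, h1]
    have h3 := (hInv (n - N) i).1
    rw [show N + (n - N) = n by omega] at h3
    rw [Nat.mod_eq_of_lt (mem_SS.mp h3).1]
  · intro i j hij n hn hcon
    exact hij (hGinj (n - N) hcon)
  · intro n hn
    have := hsum (n - N)
    rwa [show N + (n - N) = n by omega] at this
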